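/- For any t > 0 and any complex-valued functions f, g differentiable at t with |f(t)| ≠ 0 and |g(t)| ≠ 0, the functionals σ₀²(h;t) = -(d/dt|h(t)|)/(t|h(t)|) satisfy: |σ₀²(f;t) - σ₀²(g;t)| ≤ (|g(t)|/(t|f(t)|²))·[(2t·|σ₀²(g;t)| + |g'(t)/g(t)|)·|f(t)-g(t)| + |f'(t)-g'(t)| + r(t)], where r(t) = (1/|g(t)|)·[t·|σ₀²(g;t)|·|f(t)-g(t)|² + |f(t)-g(t)|·|f'(t)-g'(t)|]. -/

import Mathlib

open Complex Real InnerProductSpace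

/-- The functional `σ₀²(f;t) = -(d/dt|f(t)|)/(t·|f(t)|)`. -/
noncomputable def sigmaSqFun (f : ℝ → ℂ) (t : ℝ) : ℝ :=
  -(deriv (fun s : ℝ => ‖f s‖) t) / (t * ‖f t‖)

lemma deriv_abs_eq (h : ℝ → ℂ) (t : ℝ) (hd : DifferentiableAt ℝ h t)
    (habs : DifferentiableAt ℝ (fun s : ℝ => ‖h s‖) t) (h0 : h t ≠ 0) :
    deriv (fun s : ℝ => ‖h s‖) t
      = ((starRingEnd ℂ) (h t) * deriv h t).re / ‖h t‖ := by
  have hA : (0:ℝ) < ‖h t‖ := norm_pos_iff.mpr h0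
  have h1 : HasDerivAt (fun s : ℝ => ‖h s‖ ^ 2) (2 * ⟪h t, deriv h t⟫_ℝ) t :=
    hd.hasDerivAt.norm_sq
  have h2 : HasDerivAt (fun s : ℝ => ‖h s‖ ^ 2)
      (2 * ‖h t‖ ^ 1 * deriv (fun s : ℝ => ‖h s‖) t) t := by
    simpa using habs.hasDerivAt.fun_pow 2
  have h12 : (fun s : ℝ => ‖h s‖ ^ 2) = fun s : ℝ => ‖h s‖ ^ 2 := by
    funext s; simp
  rw [h12] at h1
  have := h1.unique h2
  rw [Complex.inner] at this
  field_simp at this ⊢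
  linarith [this]

theorem stmt3 (f g : ℝ → ℂ) (t : ℝ) (ht : 0 < t)
    (hf : DifferentiableAt ℝ f t) (hg : DifferentiableAt ℝ g t)
    (hfabs : DifferentiableAt ℝ (fun s : ℝ => ‖f s‖) t)
    (hgabs : DifferentiableAt ℝ (fun s : ℝ => ‖g s‖) t)
    (hf0 : f t ≠ 0) (hg0 : g t ≠ 0) :
    |sigmaSqFun f t - sigmaSqFun g t| ≤
      (‖g t‖ / (t * (‖f t‖) ^ 2)) *
        ((2 * t * |sigmaSqFun g t| + ‖deriv g t / g t‖) *
            ‖f t - g t‖ +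
          ‖deriv f t - deriv g t‖ +
          (1 / ‖g t‖) *
            (t * |sigmaSqFun g t| * (‖f t - g t‖) ^ 2 +
              ‖f t - g t‖ * ‖deriv f t - deriv g t‖)) := by
  set A := ‖f t‖ with hAdef
  set B := ‖g t‖ with hBdef
  set P := ((starRingEnd ℂ) (f t) * deriv f t).re with hPdef
  set Q := ((starRingEnd ℂ) (g t) * deriv g t).re with hQdef
  set D := ‖f t - g t‖ with hDdef
  set D' := ‖deriv f t - deriv g t‖ with hD'def
  set G := ‖deriv g t‖ with hGdef
  have hA : (0:ℝ) < A := norm_pos_iff.mpr hf0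
  have hB : (0:ℝ) < B := norm_pos_iff.mpr hg0
  have hD0 : (0:ℝ) ≤ D := norm_nonneg _
  have hD'0 : (0:ℝ) ≤ D' := norm_nonneg _
  have hG0 : (0:ℝ) ≤ G := norm_nonneg _
  have htA : (0:ℝ) < t * A ^ 2 := mul_pos ht (pow_pos hA 2)
  have htB : (0:ℝ) < t * B ^ 2 := mul_pos ht (pow_pos hB 2)
  have hden : (0:ℝ) < t * A ^ 2 * B ^ 2 := mul_pos htA (pow_pos hB 2)
  -- derivatives of the moduli
  have hfa : deriv (fun s : ℝ => ‖f s‖) t = P / A :=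
    deriv_abs_eq f t hf hfabs hf0
  have hga : deriv (fun s : ℝ => ‖g s‖) t = Q / B :=
    deriv_abs_eq g t hg hgabs hg0
  have hsf : sigmaSqFun f t = -P / (t * A ^ 2) := by
    rw [sigmaSqFun, hfa, ← hAdef]
    rw [← neg_div, div_div]
    congr 1; ring
  have hsg : sigmaSqFun g t = -Q / (t * B ^ 2) := by
    rw [sigmaSqFun, hga, ← hBdef]
    rw [← neg_div, div_div]
    congr 1; ring
  have hsgabs : |sigmaSqFun g t| = |Q| / (t * B ^ 2) := by
    rw [hsg, abs_div, abs_neg, abs_of_pos htB]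
  have hgg : ‖deriv g t / g t‖ = G / B := by
    rw [norm_div]
  -- key pointwise bounds
  have hABle : A ≤ B + D := by
    calc A = ‖g t + (f t - g t)‖ := by rw [hAdef]; ring_nf
    _ ≤ B + D := norm_add_le _ _
  have hABsq : |A ^ 2 - B ^ 2| ≤ 2 * B * D + D ^ 2 := by
    have h1 : |A - B| ≤ D := abs_norm_sub_norm_le _ _
    have h2 : |A ^ 2 - B ^ 2| = |A - B| * (A + B) := by
      rw [← abs_of_pos (show (0:ℝ) < A + B by linarith), ← abs_mul]; ring_nf
    nlinarith [abs_nonneg (A - B)]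
  have hPQ : |P - Q| ≤ A * D' + D * G := by
    have ec : (starRingEnd ℂ) (f t) * deriv f t - (starRingEnd ℂ) (g t) * deriv g t
        = (starRingEnd ℂ) (f t) * (deriv f t - deriv g t)
          + (starRingEnd ℂ) (f t - g t) * deriv g t := by
      rw [map_sub]; ring
    have e : P - Q = ((starRingEnd ℂ) (f t) * (deriv f t - deriv g t)).re
        + ((starRingEnd ℂ) (f t - g t) * deriv g t).re := by
      rw [hPdef, hQdef, ← Complex.sub_re, ec, Complex.add_re]
    rw [e]
    have b1 : |((starRingEnd ℂ) (f t) * (deriv f t - deriv g t)).re| ≤ A * D' := by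
      calc _ ≤ ‖(starRingEnd ℂ) (f t) * (deriv f t - deriv g t)‖ :=
            Complex.abs_re_le_norm _
        _ = A * D' := by rw [norm_mul, Complex.norm_conj]
    have b2 : |((starRingEnd ℂ) (f t - g t) * deriv g t).re| ≤ D * G := by
      calc _ ≤ ‖(starRingEnd ℂ) (f t - g t) * deriv g t‖ :=
            Complex.abs_re_le_norm _
        _ = D * G := by rw [norm_mul, Complex.norm_conj]
    calc |_ + _| ≤ _ := abs_add_le _ _
      _ ≤ A * D' + D * G := add_le_add b1 b2
  -- the key inequality with common denominator cleared
  have hKey : |A ^ 2 * Q - B ^ 2 * P| ≤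
      2 * B * |Q| * D + B ^ 2 * G * D + B ^ 3 * D' + |Q| * D ^ 2 + B ^ 2 * D * D' := by
    have e : A ^ 2 * Q - B ^ 2 * P = Q * (A ^ 2 - B ^ 2) - B ^ 2 * (P - Q) := by ring
    calc |A ^ 2 * Q - B ^ 2 * P| = |Q * (A ^ 2 - B ^ 2) - B ^ 2 * (P - Q)| := by rw [e]
      _ ≤ |Q * (A ^ 2 - B ^ 2)| + |B ^ 2 * (P - Q)| := abs_sub _ _
      _ = |Q| * |A ^ 2 - B ^ 2| + B ^ 2 * |P - Q| := by
          rw [abs_mul, abs_mul, abs_of_pos (pow_pos hB 2)]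
      _ ≤ |Q| * (2 * B * D + D ^ 2) + B ^ 2 * ((B + D) * D' + D * G) := by
          have := abs_nonneg Q
          gcongr
          exact le_trans hPQ (by nlinarith)
      _ = 2 * B * |Q| * D + B ^ 2 * G * D + B ^ 3 * D' + |Q| * D ^ 2 + B ^ 2 * D * D' := by
          ring
  -- rewrite both sides over the common denominator t * A^2 * B^2
  have eL : |sigmaSqFun f t - sigmaSqFun g t| = |A ^ 2 * Q - B ^ 2 * P| / (t * A ^ 2 * B ^ 2) := by
    rw [hsf, hsg]
    rw [div_sub_div _ _ (ne_of_gt htA) (ne_of_gt htB), abs_div,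
      abs_of_pos (mul_pos htA htB)]
    rw [div_eq_div_iff (mul_pos htA htB).ne' hden.ne']
    rw [show -P * (t * B ^ 2) - t * A ^ 2 * -Q = t * (A ^ 2 * Q - B ^ 2 * P) by ring,
      abs_mul, abs_of_pos ht]
    ring
  have eR : (B / (t * A ^ 2)) *
        ((2 * t * |sigmaSqFun g t| + ‖deriv g t / g t‖) * D + D' +
          (1 / B) * (t * |sigmaSqFun g t| * D ^ 2 + D * D')) =
      (2 * B * |Q| * D + B ^ 2 * G * D + B ^ 3 * D' + |Q| * D ^ 2 + B ^ 2 * D * D') /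
        (t * A ^ 2 * B ^ 2) := by
    rw [hsgabs, hgg]
    field_simp
    ring
  rw [eL, eR]
  exact (div_le_div_iff_of_pos_right hden).mpr hKey
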